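/- arXiv:1807.06308 — 6 statements merged into one kernel-verified Lean document; each statement's English description precedes it below -/
import Mathlib

section
/- Let E be an n×n complex positive semidefinite matrix with 1 − E also positive semidefinite (i.e., 0 ≤ E ≤ 1). Then there exist n×n complex matrices M_1, …, M_n such that for each i all entries of M_i outside the i-th row are zero, and E + Σ_{i=1}^n M_i† M_i = 1. (Thus any incoherent measurement operator E_0 = E can be completed to a POVM by incoherent measurement operators E_i = M_i† M_i.) -/
open Matrix
open scoped ComplexOrder

/-- Any incoherent POVM element `E` with `0 ≤ E ≤ 1` can be
completed to a POVM by incoherent Kraus operators `M i` each of which is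
supported on a single row (so `E + Σ_i (M i)† (M i) = 1`). -/
theorem incoherent_povm_completion (n : ℕ) (E : Matrix (Fin n) (Fin n) ℂ)
    (hE : E.PosSemidef) (hE1 : (1 - E).PosSemidef) :
    ∃ M : Fin n → Matrix (Fin n) (Fin n) ℂ,
      (∀ i j k, j ≠ i → M i j k = 0) ∧
      E + ∑ i, (M i)ᴴ * (M i) = 1 := by
  obtain ⟨S, hS⟩ : ∃ S : Matrix (Fin n) (Fin n) ℂ, 1 - E = star S * S := by
    open scoped MatrixOrder in exact CStarAlgebra.nonneg_iff_eq_star_mul_self.mp hE1.nonneg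
  refine ⟨fun i => Matrix.of fun j k => if j = i then S j k else 0, ?_, ?_⟩
  · intro i j k hj
    simp [hj]
  · have hsum : (∑ i, (Matrix.of fun j k => if j = i then S j k else 0)ᴴ *
        (Matrix.of fun j k => if j = i then S j k else 0) : Matrix (Fin n) (Fin n) ℂ)
        = Sᴴ * S := by
      ext j k
      rw [Matrix.sum_apply]
      simp only [Matrix.mul_apply, Matrix.conjTranspose_apply, Matrix.of_apply]
      rw [Finset.sum_comm]
      refine Finset.sum_congr rfl fun l _ => ?_
      rw [Finset.sum_eq_single l]
      · simp
      · intro i _ hi; simp [Ne.symm hi]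
      · simp
    rw [hsum, ← Matrix.star_eq_conjTranspose, ← hS]
    exact add_sub_cancel E 1
end

section
/- Let ψ : {0,1}×{0,1} → ℂ be the coefficient vector of a two-qubit pure state, written ψ = (a,b,c,d) with a = ψ(0,0), b = ψ(0,1), c = ψ(1,0), d = ψ(1,1), all four nonzero. Let A and B be invertible 2×2 complex matrices, each of which is either diagonal (off-diagonal entries zero) or antidiagonal (diagonal entries zero), and let φ = (A ⊗ B)ψ with coefficients (a',b',c',d'). Then a',b',c',d' are all nonzero, and: if A and B are both diagonal or both antidiagonal, then a'd'/(b'c') = ad/(bc); if exactly one of A, B is antidiagonal, then a'd'/(b'c') = bc/(ad). Hence the unordered pair {ad/(bc), bc/(ad)} is invariant under invertible local SIO operators. -/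
/-- A 2×2 matrix is diagonal if its off-diagonal entries vanish. -/
def Diag2 (A : Matrix (Fin 2) (Fin 2) ℂ) : Prop := A 0 1 = 0 ∧ A 1 0 = 0

/-- A 2×2 matrix is antidiagonal if its diagonal entries vanish. -/
def Anti2 (A : Matrix (Fin 2) (Fin 2) ℂ) : Prop := A 0 0 = 0 ∧ A 1 1 = 0

/-- The action of the Kronecker product `A ⊗ B` of local operators on a
two-qubit coefficient vector `ψ`. -/
noncomputable def kron2 (A B : Matrix (Fin 2) (Fin 2) ℂ) (ψ : Fin 2 → Fin 2 → ℂ) :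
    Fin 2 → Fin 2 → ℂ :=
  fun i j => ∑ k, ∑ l, A i k * B j l * ψ k l

lemma det_ne_zero_of_isUnit {A : Matrix (Fin 2) (Fin 2) ℂ} (hA : IsUnit A) : A.det ≠ 0 :=
  ((Matrix.isUnit_iff_isUnit_det A).mp hA).ne_zero

lemma diag_entries_ne {A : Matrix (Fin 2) (Fin 2) ℂ} (hA : IsUnit A) (h : Diag2 A) :
    A 0 0 ≠ 0 ∧ A 1 1 ≠ 0 := by
  have hd := det_ne_zero_of_isUnit hA
  rw [Matrix.det_fin_two, h.1, h.2] at hd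
  simp only [mul_zero, sub_zero] at hd
  exact mul_ne_zero_iff.mp hd

lemma anti_entries_ne {A : Matrix (Fin 2) (Fin 2) ℂ} (hA : IsUnit A) (h : Anti2 A) :
    A 0 1 ≠ 0 ∧ A 1 0 ≠ 0 := by
  have hd := det_ne_zero_of_isUnit hA
  rw [Matrix.det_fin_two, h.1, h.2] at hd
  simp only [zero_mul, mul_zero, zero_sub, neg_ne_zero] at hd
  exact mul_ne_zero_iff.mp hd

lemma not_both {A : Matrix (Fin 2) (Fin 2) ℂ} (hA : IsUnit A) (h : Diag2 A) : ¬ Anti2 A := by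
  intro h'
  exact (diag_entries_ne hA h).1 h'.1

/-- local invertible SIO operators (diagonal or antidiagonal
invertible matrices) preserve the nonvanishing of the four product terms of a
two-qubit pure state, and the ratio `ad/(bc)` is preserved when both local
operators have the same type and inverted when they have different types. -/
theorem sio_preserves_ratio (A B : Matrix (Fin 2) (Fin 2) ℂ)
    (hA : IsUnit A) (hB : IsUnit B)
    (hAtype : Diag2 A ∨ Anti2 A) (hBtype : Diag2 B ∨ Anti2 B)
    (ψ : Fin 2 → Fin 2 → ℂ) (hψ : ∀ i j, ψ i j ≠ 0) :
    (∀ i j, kron2 A B ψ i j ≠ 0) ∧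
    (((Diag2 A ∧ Diag2 B) ∨ (Anti2 A ∧ Anti2 B)) →
      kron2 A B ψ 0 0 * kron2 A B ψ 1 1 / (kron2 A B ψ 0 1 * kron2 A B ψ 1 0) =
        ψ 0 0 * ψ 1 1 / (ψ 0 1 * ψ 1 0)) ∧
    (((Diag2 A ∧ Anti2 B) ∨ (Anti2 A ∧ Diag2 B)) →
      kron2 A B ψ 0 0 * kron2 A B ψ 1 1 / (kron2 A B ψ 0 1 * kron2 A B ψ 1 0) =
        ψ 0 1 * ψ 1 0 / (ψ 0 0 * ψ 1 1)) := by
  have h00 := hψ 0 0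
  have h01 := hψ 0 1
  have h10 := hψ 1 0
  have h11 := hψ 1 1
  rcases hAtype with hAd | hAa <;> rcases hBtype with hBd | hBa
  · obtain ⟨hA0, hA1⟩ := diag_entries_ne hA hAd
    obtain ⟨hB0, hB1⟩ := diag_entries_ne hB hBd
    refine ⟨?_, ?_, ?_⟩
    · intro i j
      fin_cases i <;> fin_cases j <;>
        simp [kron2, Fin.sum_univ_two, hAd.1, hAd.2, hBd.1, hBd.2, hA0, hA1, hB0, hB1,
          h00, h01, h10, h11]
    · intro _
      simp only [kron2, Fin.sum_univ_two, hAd.1, hAd.2, hBd.1, hBd.2, zero_mul, mul_zero,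
        add_zero, zero_add]
      field_simp
    · rintro (⟨_, hBa⟩ | ⟨hAa, _⟩)
      · exact absurd hBa (not_both hB hBd)
      · exact absurd hAa (not_both hA hAd)
  · obtain ⟨hA0, hA1⟩ := diag_entries_ne hA hAd
    obtain ⟨hB0, hB1⟩ := anti_entries_ne hB hBa
    refine ⟨?_, ?_, ?_⟩
    · intro i j
      fin_cases i <;> fin_cases j <;>
        simp [kron2, Fin.sum_univ_two, hAd.1, hAd.2, hBa.1, hBa.2, hA0, hA1, hB0, hB1,
          h00, h01, h10, h11]
    · rintro (⟨_, hBd⟩ | ⟨hAa, _⟩)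
      · exact absurd hBa (not_both hB hBd)
      · exact absurd hAa (not_both hA hAd)
    · intro _
      simp only [kron2, Fin.sum_univ_two, hAd.1, hAd.2, hBa.1, hBa.2, zero_mul, mul_zero,
        add_zero, zero_add]
      field_simp
  · obtain ⟨hA0, hA1⟩ := anti_entries_ne hA hAa
    obtain ⟨hB0, hB1⟩ := diag_entries_ne hB hBd
    refine ⟨?_, ?_, ?_⟩
    · intro i j
      fin_cases i <;> fin_cases j <;>
        simp [kron2, Fin.sum_univ_two, hAa.1, hAa.2, hBd.1, hBd.2, hA0, hA1, hB0, hB1,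
          h00, h01, h10, h11]
    · rintro (⟨hAd, _⟩ | ⟨_, hBa⟩)
      · exact absurd hAa (not_both hA hAd)
      · exact absurd hBa (not_both hB hBd)
    · intro _
      simp only [kron2, Fin.sum_univ_two, hAa.1, hAa.2, hBd.1, hBd.2, zero_mul, mul_zero,
        add_zero, zero_add]
      field_simp
  · obtain ⟨hA0, hA1⟩ := anti_entries_ne hA hAa
    obtain ⟨hB0, hB1⟩ := anti_entries_ne hB hBa
    refine ⟨?_, ?_, ?_⟩
    · intro i j
      fin_cases i <;> fin_cases j <;>
        simp [kron2, Fin.sum_univ_two, hAa.1, hAa.2, hBa.1, hBa.2, hA0, hA1, hB0, hB1,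
          h00, h01, h10, h11]
    · intro _
      simp only [kron2, Fin.sum_univ_two, hAa.1, hAa.2, hBa.1, hBa.2, zero_mul, mul_zero,
        add_zero, zero_add]
      field_simp
    · rintro (⟨hAd, _⟩ | ⟨_, hBd⟩)
      · exact absurd hAa (not_both hA hAd)
      · exact absurd hBa (not_both hB hBd)
end

section
/- Let a,b,c,d be nonzero complex numbers, set r = (a·d)/(b·c), α = 1/√(3 + |r|²) and β = r·α. Then α is a positive real number, 0 < |β| < 1, 3α² + |β|² = 1, and there exist invertible diagonal 2×2 complex matrices A and B such that (A ⊗ B) applied to the two-qubit coefficient vector (a,b,c,d) (with a at position (0,0), b at (0,1), c at (1,0), d at (1,1)) equals the vector (α, α, α, β). Hence any two-qubit pure state with four nonzero product terms is SLICC equivalent to a normalized state of the form α(|00⟩+|01⟩+|10⟩) + β|11⟩. -/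
/-- any two-qubit pure state `a|00⟩+b|01⟩+c|10⟩+d|11⟩` with all
four product terms nonzero is SLICC equivalent, via invertible diagonal local
operators, to the normalized state `α(|00⟩+|01⟩+|10⟩)+β|11⟩` where
`β/α = r = ad/(bc)`. -/
theorem slicc_normal_form (a b c d : ℂ)
    (ha : a ≠ 0) (hb : b ≠ 0) (hc : c ≠ 0) (hd : d ≠ 0) :
    let r : ℂ := a * d / (b * c)
    let α : ℝ := 1 / Real.sqrt (3 + ‖r‖ ^ 2)
    let β : ℂ := r * (α : ℂ)
    0 < α ∧ 0 < ‖β‖ ∧ ‖β‖ < 1 ∧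
    3 * α ^ 2 + ‖β‖ ^ 2 = 1 ∧
    ∃ A B : Matrix (Fin 2) (Fin 2) ℂ, IsUnit A ∧ IsUnit B ∧
      Diag2 A ∧ Diag2 B ∧
      kron2 A B (fun k l => !![a, b; c, d] k l) 0 0 = (α : ℂ) ∧
      kron2 A B (fun k l => !![a, b; c, d] k l) 0 1 = (α : ℂ) ∧
      kron2 A B (fun k l => !![a, b; c, d] k l) 1 0 = (α : ℂ) ∧
      kron2 A B (fun k l => !![a, b; c, d] k l) 1 1 = β := by
  intro r α β
  have hr : r ≠ 0 := div_ne_zero (mul_ne_zero ha hd) (mul_ne_zero hb hc)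
  have hrabs : 0 < ‖r‖ := norm_pos_iff.mpr hr
  have hpos : (0:ℝ) < 3 + ‖r‖ ^ 2 := by positivity
  have hsq : 0 < Real.sqrt (3 + ‖r‖ ^ 2) := Real.sqrt_pos.mpr hpos
  have hα : 0 < α := by
    simpa [α] using (one_div_pos.mpr hsq)
  have hα2 : α ^ 2 = 1 / (3 + ‖r‖ ^ 2) := by
    simp [α, div_pow, Real.sq_sqrt hpos.le]
  have hβabs : ‖β‖ = ‖r‖ * α := by
    simp [β, Complex.norm_real, abs_of_pos hα]
  have hsum : 3 * α ^ 2 + ‖β‖ ^ 2 = 1 := by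
    rw [hβabs, mul_pow, hα2]
    field_simp
  refine ⟨hα, by rw [hβabs]; exact mul_pos hrabs hα, ?_, hsum, ?_⟩
  · nlinarith [sq_nonneg ‖β‖, sq_nonneg α, hα, hsum,
      mul_pos (by norm_num : (0:ℝ) < 3) (mul_pos hα hα)]
  · refine ⟨!![1, 0; 0, a / c], !![(α:ℂ) / a, 0; 0, (α:ℂ) / b], ?_, ?_, ⟨rfl, rfl⟩,
      ⟨rfl, rfl⟩, ?_, ?_, ?_, ?_⟩
    · rw [Matrix.isUnit_iff_isUnit_det]
      simp [Matrix.det_fin_two_of, isUnit_iff_ne_zero, div_ne_zero ha hc]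
    · rw [Matrix.isUnit_iff_isUnit_det]
      have hαC : (α : ℂ) ≠ 0 := by exact_mod_cast hα.ne'
      simp [Matrix.det_fin_two_of, isUnit_iff_ne_zero, div_ne_zero hαC ha,
        div_ne_zero hαC hb]
    · simp [kron2, Fin.sum_univ_two]
      field_simp
    · simp [kron2, Fin.sum_univ_two]
      field_simp
    · simp [kron2, Fin.sum_univ_two]
      field_simp
    · simp [kron2, Fin.sum_univ_two, β, r]
      field_simp
end

section
/- Let a, b, a', d' be nonzero complex numbers. Let ψ : {0,1}×{0,1} → ℂ be the vector with ψ(0,0) = a, ψ(0,1) = b and ψ(1,0) = ψ(1,1) = 0, and let φ be the vector with φ(0,0) = a', φ(1,1) = d' and φ(0,1) = φ(1,0) = 0. Then: (i) there are no invertible 2×2 complex matrices A, B, each with at most one nonzero entry per column, such that φ = (A⊗B)ψ; (ii) the same nonexistence holds with ψ replaced by the vector supported on {(0,0),(1,0)} with nonzero values; and (iii) it also holds between a vector supported on {(0,0),(0,1)} and one supported on {(0,0),(1,0)} (both with nonzero values). Hence the three classes a|00⟩+b|01⟩, a|00⟩+c|10⟩ and a|00⟩+d|11⟩ of two-qubit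 states with two nonzero product terms are pairwise SLICC inequivalent. -/
/-- A complex matrix is an incoherent Kraus operator if each of its columns
contains at most one nonzero entry. -/
def IncoherentKraus {m n : Type*} (F : Matrix m n ℂ) : Prop :=
  ∀ (j : n) (i i' : m), F i j ≠ 0 → F i' j ≠ 0 → i = i'

/-- the three classes `a|00⟩+b|01⟩`, `a|00⟩+c|10⟩` and
`a|00⟩+d|11⟩` of two-qubit states with two nonzero product terms are pairwise
SLICC inequivalent. -/
theorem two_term_classes_inequivalent (a b a' d' : ℂ)
    (ha : a ≠ 0) (hb : b ≠ 0) (ha' : a' ≠ 0) (hd' : d' ≠ 0) :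
    (¬ ∃ A B : Matrix (Fin 2) (Fin 2) ℂ, IsUnit A ∧ IsUnit B ∧
        IncoherentKraus A ∧ IncoherentKraus B ∧
        (∀ i j, (!![a', 0; 0, d'] : Matrix (Fin 2) (Fin 2) ℂ) i j =
          kron2 A B (fun k l => !![a, b; 0, 0] k l) i j)) ∧
    (∀ a₂ c₂ : ℂ, a₂ ≠ 0 → c₂ ≠ 0 →
      ¬ ∃ A B : Matrix (Fin 2) (Fin 2) ℂ, IsUnit A ∧ IsUnit B ∧
          IncoherentKraus A ∧ IncoherentKraus B ∧
          (∀ i j, (!![a', 0; 0, d'] : Matrix (Fin 2) (Fin 2) ℂ) i j =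
            kron2 A B (fun k l => !![a₂, 0; c₂, 0] k l) i j)) ∧
    (∀ a₁ b₁ a₂ c₂ : ℂ, a₁ ≠ 0 → b₁ ≠ 0 → a₂ ≠ 0 → c₂ ≠ 0 →
      ¬ ∃ A B : Matrix (Fin 2) (Fin 2) ℂ, IsUnit A ∧ IsUnit B ∧
          IncoherentKraus A ∧ IncoherentKraus B ∧
          (∀ i j, (!![a₂, 0; c₂, 0] : Matrix (Fin 2) (Fin 2) ℂ) i j =
            kron2 A B (fun k l => !![a₁, b₁; 0, 0] k l) i j)) := by
  refine ⟨?_, ?_, ?_⟩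
  · rintro ⟨A, B, -, -, -, -, h⟩
    have e00 := h 0 0
    have e01 := h 0 1
    have e10 := h 1 0
    have e11 := h 1 1
    simp [kron2, Fin.sum_univ_two] at e00 e01 e10 e11
    have key : a' * d' = 0 := by
      linear_combination d' * e00 + (A 0 0 * B 0 0 * a + A 0 0 * B 0 1 * b) * e11 -
        (A 1 0 * B 0 0 * a + A 1 0 * B 0 1 * b) * e01
    exact mul_ne_zero ha' hd' key
  · rintro a₂ c₂ ha₂ hc₂ ⟨A, B, -, -, -, -, h⟩
    have e00 := h 0 0
    have e01 := h 0 1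
    have e10 := h 1 0
    have e11 := h 1 1
    simp [kron2, Fin.sum_univ_two] at e00 e01 e10 e11
    have key : a' * d' = 0 := by
      linear_combination d' * e00 + (A 0 0 * B 0 0 * a₂ + A 0 1 * B 0 0 * c₂) * e11 -
        (A 1 0 * B 0 0 * a₂ + A 1 1 * B 0 0 * c₂) * e01
    exact mul_ne_zero ha' hd' key
  · rintro a₁ b₁ a₂ c₂ ha₁ hb₁ ha₂ hc₂ ⟨A, B, -, -, hIA, -, h⟩
    have e00 := h 0 0
    have e10 := h 1 0
    simp [kron2, Fin.sum_univ_two] at e00 e10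
    have hA00 : A 0 0 ≠ 0 := by
      intro h0
      apply ha₂
      rw [e00, h0]; ring
    have hA10 : A 1 0 ≠ 0 := by
      intro h0
      apply hc₂
      rw [e10, h0]; ring
    exact absurd (hIA 0 0 1 hA00 hA10) (by decide)
end

section
/- Let t and z be real numbers with 0 < t and 0 ≤ z < 1. Then the 2-dimensional Lebesgue measure of the set {(s,u) ∈ ℝ² : s² ≤ t² and (1−z²)·s²/t² + u² ≤ 1} equals (2t/√(1−z²))·arcsin(√(1−z²)) + 2zt. (This is the accessible volume V_a of a single-qubit state with Bloch vector components satisfying r_x² + r_y² = t² and |r_z| = z under SIO and IC operations, the set being the region of Bloch-plane points (s,u) reachable from (t,z) according to the transformation conditions s_x²+s_y² ≤ r_x²+r_y² and ((1−r_z²)/(r_x²+r_y²))(s_x²+s_y²) + s_z² ≤ 1.) -/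
open MeasureTheory Set

lemma aux_hasDerivAt_F {x : ℝ} (hx : x ∈ Set.Ioo (-1:ℝ) 1) :
    HasDerivAt (fun y : ℝ => Real.arcsin y + y * Real.sqrt (1 - y ^ 2))
      (2 * Real.sqrt (1 - x ^ 2)) x := by
  obtain ⟨h1, h2⟩ := hx
  have hx1 : x ≠ -1 := ne_of_gt h1
  have hx2 : x ≠ 1 := ne_of_lt h2
  have hpos : 0 < 1 - x ^ 2 := by nlinarith
  have hs : 0 < Real.sqrt (1 - x ^ 2) := Real.sqrt_pos.mpr hpos
  have hinner : HasDerivAt (fun y : ℝ => 1 - y ^ 2) (-(2 * x)) x := by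
    simpa using ((hasDerivAt_pow 2 x).const_sub 1)
  have hsqrt : HasDerivAt (fun y : ℝ => Real.sqrt (1 - y ^ 2))
      (1 / (2 * Real.sqrt (1 - x ^ 2)) * (-(2 * x))) x :=
    (Real.hasDerivAt_sqrt (ne_of_gt hpos)).comp x hinner
  have hmul : HasDerivAt (fun y : ℝ => y * Real.sqrt (1 - y ^ 2))
      (1 * Real.sqrt (1 - x ^ 2) + x * (1 / (2 * Real.sqrt (1 - x ^ 2)) * (-(2 * x)))) x :=
    (hasDerivAt_id x).mul hsqrt
  have := (Real.hasDerivAt_arcsin hx1 hx2).add hmul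
  refine this.congr_deriv ?_
  have hsq : Real.sqrt (1 - x ^ 2) ^ 2 = 1 - x ^ 2 := Real.sq_sqrt hpos.le
  field_simp
  nlinarith [hs, hsq]

lemma aux_integral (t z : ℝ) (ht : 0 < t) (hz0 : 0 ≤ z) (hz1 : z < 1) :
    ∫ x in (-t)..t, 2 * Real.sqrt (1 - (1 - z ^ 2) * x ^ 2 / t ^ 2) =
      2 * t / Real.sqrt (1 - z ^ 2) * Real.arcsin (Real.sqrt (1 - z ^ 2)) + 2 * z * t := by
  set c := Real.sqrt (1 - z ^ 2) with hc_def
  have hz2 : 0 < 1 - z ^ 2 := by nlinarith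
  have hc : 0 < c := Real.sqrt_pos.mpr hz2
  have hc2 : c ^ 2 = 1 - z ^ 2 := Real.sq_sqrt hz2.le
  have hc1 : c ≤ 1 := by
    nlinarith [hc2, hc]
  set G : ℝ → ℝ := fun x => t / c *
    (Real.arcsin (c * x / t) + (c * x / t) * Real.sqrt (1 - (c * x / t) ^ 2)) with hG_def
  have hw2 : ∀ x : ℝ, 1 - (c * x / t) ^ 2 = 1 - (1 - z ^ 2) * x ^ 2 / t ^ 2 := by
    intro x
    rw [div_pow, mul_pow, hc2]
  have hderiv : ∀ x ∈ Set.Ioo (-t) t,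
      HasDerivAt G (2 * Real.sqrt (1 - (1 - z ^ 2) * x ^ 2 / t ^ 2)) x := by
    intro x hx
    have hw : c * x / t ∈ Set.Ioo (-1:ℝ) 1 := by
      constructor
      · rw [neg_lt, ← neg_div, ← mul_neg, div_lt_one ht]
        nlinarith [hx.1, hx.2]
      · rw [div_lt_one ht]
        nlinarith [hx.1, hx.2]
    have hlin : HasDerivAt (fun y : ℝ => c * y / t) (c / t) x := by
      simpa [mul_div_assoc, mul_comm] using
        ((hasDerivAt_id x).const_mul (c / t))
    have hF := (aux_hasDerivAt_F hw).comp x hlin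
    have := hF.const_mul (t / c)
    refine this.congr_deriv ?_
    rw [hw2 x]
    field_simp
  have hlin : Continuous fun x : ℝ => c * x / t := by fun_prop
  have hcont : ContinuousOn G (Set.Icc (-t) t) :=
    (continuous_const.mul ((Real.continuous_arcsin.comp hlin).add
      (hlin.mul (Real.continuous_sqrt.comp
        (continuous_const.sub (hlin.pow 2)))))).continuousOn
  have hint : IntervalIntegrable
      (fun x => 2 * Real.sqrt (1 - (1 - z ^ 2) * x ^ 2 / t ^ 2)) volume (-t) t := by
    exact (continuous_const.mul (Real.continuous_sqrt.comp (by fun_prop))).intervalIntegrable _ _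
  have hle : -t ≤ t := by linarith
  rw [intervalIntegral.integral_eq_sub_of_hasDerivAt_of_le hle hcont hderiv hint]
  have h1 : c * t / t = c := by field_simp
  have h2 : c * -t / t = -c := by field_simp
  have h3 : Real.sqrt (1 - c ^ 2) = z := by
    rw [hc2, show 1 - (1 - z ^ 2) = z ^ 2 by ring, Real.sqrt_sq hz0]
  simp only [hG_def, h1, h2, Real.arcsin_neg, neg_sq]
  rw [h3]
  field_simp
  ring

/-- the accessible volume under SIO/IC of a single-qubit state
with Bloch components `r_x²+r_y² = t²`, `|r_z| = z` is the area of the planar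
region `{(s,u) : s² ≤ t², (1−z²)s²/t² + u² ≤ 1}`, namely
`(2t/√(1−z²))·arcsin(√(1−z²)) + 2zt`. -/
theorem qubit_accessible_volume_sio (t z : ℝ)
    (ht : 0 < t) (hz0 : 0 ≤ z) (hz1 : z < 1) :
    volume {p : ℝ × ℝ |
        p.1 ^ 2 ≤ t ^ 2 ∧ (1 - z ^ 2) * p.1 ^ 2 / t ^ 2 + p.2 ^ 2 ≤ 1} =
      ENNReal.ofReal
        (2 * t / Real.sqrt (1 - z ^ 2) * Real.arcsin (Real.sqrt (1 - z ^ 2)) +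
          2 * z * t) := by
  set S := {p : ℝ × ℝ |
      p.1 ^ 2 ≤ t ^ 2 ∧ (1 - z ^ 2) * p.1 ^ 2 / t ^ 2 + p.2 ^ 2 ≤ 1} with hS_def
  set f : ℝ → ℝ := fun x => 2 * Real.sqrt (1 - (1 - z ^ 2) * x ^ 2 / t ^ 2) with hf_def
  have hz2 : 0 < 1 - z ^ 2 := by nlinarith
  have hSm : MeasurableSet S := by
    have : S = {p : ℝ × ℝ | p.1 ^ 2 ≤ t ^ 2} ∩
        {p : ℝ × ℝ | (1 - z ^ 2) * p.1 ^ 2 / t ^ 2 + p.2 ^ 2 ≤ 1} := rfl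
    rw [this]
    exact (measurableSet_le (by fun_prop) measurable_const).inter
      (measurableSet_le (by fun_prop) measurable_const)
  have hslice : ∀ x : ℝ, volume (Prod.mk x ⁻¹' S) =
      (Icc (-t) t).indicator (fun x => ENNReal.ofReal (f x)) x := by
    intro x
    by_cases hx : x ∈ Icc (-t) t
    · rw [mem_Icc] at hx
      have hx2 : x ^ 2 ≤ t ^ 2 := sq_le_sq' hx.1 hx.2
      have hB : 0 ≤ 1 - (1 - z ^ 2) * x ^ 2 / t ^ 2 := by
        have h1 : (1 - z ^ 2) * x ^ 2 / t ^ 2 ≤ 1 := by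
          rw [div_le_one (by positivity)]
          nlinarith
        linarith
      have hsq : Real.sqrt (1 - (1 - z ^ 2) * x ^ 2 / t ^ 2) ^ 2
          = 1 - (1 - z ^ 2) * x ^ 2 / t ^ 2 := Real.sq_sqrt hB
      have hset : Prod.mk x ⁻¹' S =
          Icc (-(Real.sqrt (1 - (1 - z ^ 2) * x ^ 2 / t ^ 2)))
            (Real.sqrt (1 - (1 - z ^ 2) * x ^ 2 / t ^ 2)) := by
        ext u
        simp only [hS_def, mem_preimage, mem_setOf_eq, mem_Icc]
        constructor
        · rintro ⟨-, h⟩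
          exact abs_le_of_sq_le_sq' (by rw [hsq]; linarith) (Real.sqrt_nonneg _)
        · rintro ⟨h1, h2⟩
          refine ⟨hx2, ?_⟩
          nlinarith [hsq]
      rw [hset, Real.volume_Icc, indicator_of_mem (mem_Icc.mpr hx)]
      congr 1
      simp [hf_def]
      ring
    · have hset : Prod.mk x ⁻¹' S = ∅ := by
        ext u
        simp only [hS_def, mem_preimage, mem_setOf_eq, mem_empty_iff_false, iff_false,
          not_and]
        intro h
        exact absurd (mem_Icc.mpr (abs_le.mp (abs_le_of_sq_le_sq' h ht.le |> abs_le.mpr))) hx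
      rw [hset, indicator_of_notMem hx]
      simp
  have hIntOn : IntegrableOn f (Icc (-t) t) volume :=
    (continuous_const.mul (Real.continuous_sqrt.comp (by fun_prop))).integrableOn_Icc
  calc volume S = ∫⁻ x : ℝ, volume (Prod.mk x ⁻¹' S) := by
        rw [Measure.volume_eq_prod, Measure.prod_apply hSm]
    _ = ∫⁻ x : ℝ, (Icc (-t) t).indicator (fun x => ENNReal.ofReal (f x)) x :=
        lintegral_congr hslice
    _ = ∫⁻ x in Icc (-t) t, ENNReal.ofReal (f x) := lintegral_indicator measurableSet_Icc _
    _ = ENNReal.ofReal (∫ x in Icc (-t) t, f x) :=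
        (ofReal_integral_eq_lintegral_ofReal hIntOn
          (Filter.Eventually.of_forall fun x => by positivity)).symm
    _ = ENNReal.ofReal (∫ x in (-t)..t, f x) := by
        rw [integral_Icc_eq_integral_Ioc, intervalIntegral.integral_of_le (by linarith)]
    _ = _ := by rw [hf_def]; rw [aux_integral t z ht hz0 hz1]
end

section
/- Let t and z be real numbers with t, z ≥ 0 and t² + z² ≤ 1 (and z < 1). Then (2t/√(1−z²))·arcsin(√(1−z²)) + 2zt ≤ π, with equality if and only if z = 0 and t = 1. (Hence the supremum of the single-qubit accessible volume under SIO/IC over the Bloch ball is V_a^{sup} = π, attained by the maximally coherent pure states on the equator, and the accessible coherence is C_a(ρ) = (2/π)(√((r_x²+r_y²)/(1−r_z²))·arcsin√(1−r_z²) + |r_z|√(r_x²+r_y²)).) -/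
/-- over the Bloch ball (`t, z ≥ 0`, `t² + z² ≤ 1`, `z < 1`),
the single-qubit accessible volume under SIO/IC,
`(2t/√(1−z²))·arcsin(√(1−z²)) + 2zt`, is at most `π`, with equality exactly
for the maximally coherent pure states (`z = 0`, `t = 1`); hence
`V_a^{sup} = π`. -/
theorem qubit_accessible_volume_sup (t z : ℝ)
    (ht : 0 ≤ t) (hz0 : 0 ≤ z) (hball : t ^ 2 + z ^ 2 ≤ 1) (hz1 : z < 1) :
    2 * t / Real.sqrt (1 - z ^ 2) * Real.arcsin (Real.sqrt (1 - z ^ 2)) +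
        2 * z * t ≤ Real.pi ∧
    (2 * t / Real.sqrt (1 - z ^ 2) * Real.arcsin (Real.sqrt (1 - z ^ 2)) +
        2 * z * t = Real.pi ↔ z = 0 ∧ t = 1) := by
  have hs2 : (0:ℝ) < 1 - z ^ 2 := by nlinarith
  set s := Real.sqrt (1 - z ^ 2) with hsdef
  have hs_pos : 0 < s := Real.sqrt_pos.mpr hs2
  have hs_sq : s ^ 2 = 1 - z ^ 2 := Real.sq_sqrt hs2.le
  have hs_le1 : s ≤ 1 := by nlinarith
  have ht_le : t ≤ s := by nlinarith
  have ha0 : 0 ≤ Real.arcsin z := Real.arcsin_nonneg.mpr hz0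
  have ha2 : Real.arcsin z ≤ Real.pi / 2 := Real.arcsin_le_pi_div_two z
  have hsinz : Real.sin (Real.arcsin z) = z := Real.sin_arcsin (by linarith) hz1.le
  have haz : z ≤ Real.arcsin z := by
    have := Real.sin_le ha0
    rw [hsinz] at this; exact this
  have hA : Real.arcsin s = Real.pi / 2 - Real.arcsin z := by
    have h1 : Real.sin (Real.pi / 2 - Real.arcsin z) = s := by
      rw [Real.sin_pi_div_two_sub, Real.cos_arcsin]
    rw [← h1, Real.arcsin_sin (by linarith) (by linarith)]
  have hdiv : 2 * t / s ≤ 2 := by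
    rw [div_le_iff₀ hs_pos]; linarith
  have hdiv0 : 0 ≤ 2 * t / s := by positivity
  -- main inequality
  have hmain : 2 * t / s * Real.arcsin s + 2 * z * t ≤ Real.pi := by
    rw [hA]
    nlinarith [mul_nonneg hz0 ht, mul_le_mul_of_nonneg_right hdiv (by linarith : (0:ℝ) ≤ Real.pi / 2 - Real.arcsin z)]
  refine ⟨hmain, ?_, ?_⟩
  · intro heq
    have hzz : z = 0 := by
      by_contra hne
      have hzpos : 0 < z := lt_of_le_of_ne hz0 (Ne.symm hne)
      have hapos : 0 < Real.arcsin z := Real.arcsin_pos.mpr hzpos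
      have hstrict : z < Real.arcsin z := by
        have := Real.sin_lt hapos
        rw [hsinz] at this; exact this
      have : 2 * t / s * Real.arcsin s + 2 * z * t < Real.pi := by
        rw [hA]
        nlinarith [mul_le_mul_of_nonneg_right hdiv (by linarith : (0:ℝ) ≤ Real.pi / 2 - Real.arcsin z),
          mul_lt_mul_of_pos_left hstrict (by linarith : (0:ℝ) < 2),
          mul_le_mul_of_nonneg_left (ht_le.trans hs_le1) (by linarith : (0:ℝ) ≤ 2 * z)]
      linarith
    subst hzz
    simp only [ne_eq, OfNat.ofNat_ne_zero, not_false_eq_true, zero_pow, sub_zero] at heq hsdef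
    rw [hsdef, Real.sqrt_one] at heq
    rw [Real.arcsin_one] at heq
    constructor
    · rfl
    · have hpi : 0 < Real.pi := Real.pi_pos
      nlinarith [heq]
  · rintro ⟨hzz, htt⟩
    subst hzz; subst htt
    simp only [ne_eq, OfNat.ofNat_ne_zero, not_false_eq_true, zero_pow, sub_zero] at hsdef ⊢
    rw [hsdef, Real.sqrt_one, Real.arcsin_one]
    ring
end
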